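/- The function ψ(t) = log(1+e^{-t}) + t/(1+e^t) is increasing on (-∞,0); equivalently t ↦ -log(1+e^{-t}) - t/(1+e^t) is decreasing on (-∞,0]. -/

import Mathlib

noncomputable def psiFun (t : ℝ) : ℝ := Real.log (1 + Real.exp (-t)) + t / (1 + Real.exp t)

lemma hasDerivAt_psiFun (t : ℝ) :
    HasDerivAt psiFun (-t * Real.exp t / (1 + Real.exp t)^2) t := by
  have hE : 0 < Real.exp t := Real.exp_pos t
  have h1 : (0:ℝ) < 1 + Real.exp (-t) := by positivity
  have h2 : (0:ℝ) < 1 + Real.exp t := by positivity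
  have hlog : HasDerivAt (fun s : ℝ => Real.log (1 + Real.exp (-s)))
      (-Real.exp (-t) / (1 + Real.exp (-t))) t := by
    have hexp : HasDerivAt (fun s : ℝ => 1 + Real.exp (-s)) (-Real.exp (-t)) t := by
      have := ((Real.hasDerivAt_exp (-t)).comp t (hasDerivAt_neg t)).const_add 1
      simpa [mul_comm] using this
    simpa using hexp.log (ne_of_gt h1)
  have hq : HasDerivAt (fun s : ℝ => s / (1 + Real.exp s))
      ((1 * (1 + Real.exp t) - t * Real.exp t) / (1 + Real.exp t)^2) t := by
    exact (hasDerivAt_id t).div ((Real.hasDerivAt_exp t).const_add 1) (ne_of_gt h2)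
  have := hlog.add hq
  refine HasDerivAt.congr_deriv this ?_
  have hEn : Real.exp (-t) = (Real.exp t)⁻¹ := Real.exp_neg t
  rw [hEn]
  field_simp
  ring

theorem stmt_14 :
    StrictMonoOn psiFun (Set.Iio (0:ℝ)) ∧
    StrictAntiOn (fun t : ℝ => - Real.log (1 + Real.exp (-t)) - t / (1 + Real.exp t))
      (Set.Iic (0:ℝ)) := by
  have hderiv : ∀ t : ℝ, deriv psiFun t = -t * Real.exp t / (1 + Real.exp t)^2 :=
    fun t => (hasDerivAt_psiFun t).deriv
  have hpos : ∀ t : ℝ, t < 0 → 0 < deriv psiFun t := by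
    intro t ht
    rw [hderiv]
    have : 0 < -t := by linarith
    positivity
  have hcont : Continuous psiFun := by
    have : ∀ t : ℝ, (0:ℝ) < 1 + Real.exp t := fun t => by positivity
    unfold psiFun
    apply Continuous.add
    · exact (continuous_const.add (Real.continuous_exp.comp continuous_neg)).log
        (fun t => ne_of_gt (by have := Real.exp_pos (-t); show (0:ℝ) < 1 + Real.exp (-t); positivity))
    · exact continuous_id.div (continuous_const.add Real.continuous_exp)
        (fun t => ne_of_gt (by positivity))
  constructor
  · apply StrictMonoOn.mono (s := Set.Iic (0:ℝ)) _ Set.Iio_subset_Iic_self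
    apply strictMonoOn_of_deriv_pos (convex_Iic 0) hcont.continuousOn
    intro x hx
    rw [interior_Iic] at hx
    exact hpos x hx
  · have h : StrictAntiOn (fun t : ℝ => -psiFun t) (Set.Iic (0:ℝ)) := by
      apply strictAntiOn_of_deriv_neg (convex_Iic 0) (hcont.neg.continuousOn)
      intro x hx
      rw [interior_Iic] at hx
      rw [deriv.neg]
      linarith [hpos x hx]
    intro a ha b hb hab
    have := h ha hb hab
    simp only [psiFun, neg_add] at this
    linarith [this]
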